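/- Let D be a directed acyclic graph on vertex set {1,...,p} and let i → j be a covered edge of D, meaning pa_D(i) = pa_D(j) \ {i}. Then the directed graph D' obtained from D by replacing the edge i → j with j → i is again acyclic. -/

import Mathlib

/-- Reversing a covered edge `i → j` of a DAG yields an acyclic directed graph.
The edge relation of `D'` agrees with that of `D` except that `i → j` is
replaced by `j → i`. -/
theorem covered_edge_reversal_acyclic
    (p : ℕ) (E : Fin p → Fin p → Prop)
    (hacyc : ∀ a : Fin p, ¬ Relation.TransGen E a a)
    (i j : Fin p) (hij : i ≠ j) (hedge : E i j)
    (hcov : ∀ m : Fin p, E m i ↔ (E m j ∧ m ≠ i))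
    (E' : Fin p → Fin p → Prop)
    (hE' : ∀ a b : Fin p,
      E' a b ↔ ((E a b ∧ ¬(a = i ∧ b = j)) ∨ (a = j ∧ b = i))) :
    ∀ a : Fin p, ¬ Relation.TransGen E' a a := by
  set R : Fin p → Fin p → Prop := fun a b => E a b ∧ ¬(a = i ∧ b = j) with hR
  -- R-paths are E-paths
  have hRE : ∀ a b, Relation.TransGen R a b → Relation.TransGen E a b := by
    intro a b h
    exact Relation.TransGen.mono (fun x y (hxy : R x y) => hxy.1) a b h
  -- no R-path from i to j
  have hBij : ¬ Relation.TransGen R i j := by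
    intro h
    cases h with
    | single h => exact h.2 ⟨rfl, rfl⟩
    | tail h1 h2 =>
      rename_i c
      have hcne : c ≠ i := by
        intro hc; exact h2.2 ⟨hc, rfl⟩
      have hci : E c i := (hcov c).mpr ⟨h2.1, hcne⟩
      exact hacyc i (Relation.TransGen.tail (hRE _ _ h1) hci)
  -- decomposition of E'-paths
  have hdec : ∀ a b, Relation.TransGen E' a b →
      Relation.TransGen R a b ∨
        (Relation.ReflTransGen R a j ∧ Relation.ReflTransGen R i b) := by
    intro a b h
    induction h with
    | single h =>
      rcases (hE' _ _).mp h with h | ⟨rfl, rfl⟩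
      · exact Or.inl (Relation.TransGen.single h)
      · exact Or.inr ⟨Relation.ReflTransGen.refl, Relation.ReflTransGen.refl⟩
    | tail h1 h2 ih =>
      rcases (hE' _ _).mp h2 with h2' | ⟨rfl, rfl⟩
      · rcases ih with ih | ⟨ih1, ih2⟩
        · exact Or.inl (Relation.TransGen.tail ih h2')
        · exact Or.inr ⟨ih1, Relation.ReflTransGen.tail ih2 h2'⟩
      · rcases ih with ih | ⟨ih1, _⟩
        · exact Or.inr ⟨ih.to_reflTransGen, Relation.ReflTransGen.refl⟩
        · exact Or.inr ⟨ih1, Relation.ReflTransGen.refl⟩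
  intro a h
  rcases hdec a a h with h | ⟨h1, h2⟩
  · exact hacyc a (hRE _ _ h)
  · have hij' : Relation.ReflTransGen R i j := h2.trans h1
    rcases (Relation.reflTransGen_iff_eq_or_transGen.mp hij') with heq | htr
    · exact hij heq.symm
    · exact hBij htr
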